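/- Let {φ_i}_{i=1}^m be vectors in ℝ² and suppose there exist three indices i, j, k such that φ_i, φ_j, φ_k are nonzero, ⟨φ_i, φ_k⟩ < 0, and ⟨φ_i, φ_j⟩·⟨φ_j, φ_k⟩ > 0. Then there exist nonnegative scalars c₁, …, c_m, positive exactly on the indices i, j, k and zero elsewhere, such that {c_l φ_l}_{l=1}^m is a tight frame for ℝ². -/

import Mathlib

open scoped RealInnerProductSpace BigOperators

private lemma signs (a b c e d f n : ℝ) (h1 : f < 0) (h2 : 0 < a*c) (hd : 0 < d)
    (hn : 0 ≤ n) (id1 : a*c - b*e = n*f) (id2 : a*e + b*c = n*d) :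
    0 < c*e ∧ 0 < a*b := by
  have hbe : 0 < b*e := by nlinarith [mul_nonpos_of_nonneg_of_nonpos hn h1.le]
  have hprod : (a*e)*(b*c) = (a*c)*(b*e) := by ring
  have hsum : 0 < a*e + b*c := by
    rw [id2]
    rcases hn.lt_or_eq with h | h
    · positivity
    · exfalso
      have e2 : a*e + b*c = 0 := by rw [id2, ← h]; ring
      have hae2 : a*e = -(b*c) := by linarith
      have h3 : a*c*(b*e) = -((b*c)^2) := by rw [← hprod, hae2]; ring
      nlinarith [mul_pos h2 hbe, sq_nonneg (b*c)]
  have hae : 0 < a*e := by nlinarith [mul_pos h2 hbe, sq_nonneg (a*e - b*c)]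
  have hbc : 0 < b*c := by nlinarith
  constructor
  · nlinarith [mul_pos hbc hbe, sq_nonneg b]
  · nlinarith [mul_pos hae hbe, sq_nonneg e]

private lemma dne (a b c e f n : ℝ) (h1 : f < 0) (h2 : 0 < a*c)
    (hn : 0 ≤ n) (id1 : a*c - b*e = n*f) (id2 : a*e + b*c = 0) : False := by
  have hbe : 0 < b*e := by nlinarith [mul_nonpos_of_nonneg_of_nonpos hn h1.le]
  have hprod : (a*e)*(b*c) = (a*c)*(b*e) := by ring
  have hae2 : a*e = -(b*c) := by linarith
  have h3 : a*c*(b*e) = -((b*c)^2) := by rw [← hprod, hae2]; ring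
  nlinarith [mul_pos h2 hbe, sq_nonneg (b*c)]

private lemma key (x0 x1 y0 y1 z0 z1 : ℝ)
    (h1 : x0*z0 + x1*z1 < 0)
    (h2 : 0 < (x0*y0 + x1*y1) * (y0*z0 + y1*z1)) :
    ∃ p q r : ℝ, 0 < p ∧ 0 < q ∧ 0 < r ∧
      p*(x0^2 - x1^2) + q*(y0^2 - y1^2) + r*(z0^2 - z1^2) = 0 ∧
      p*(x0*x1) + q*(y0*y1) + r*(z0*z1) = 0 := by
  have main : ∀ X0 X1 Y0 Y1 Z0 Z1 : ℝ, X0*Z0 + X1*Z1 < 0 →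
      0 < (X0*Y0 + X1*Y1) * (Y0*Z0 + Y1*Z1) → 0 < X0*Z1 - X1*Z0 →
      ∃ p q r : ℝ, 0 < p ∧ 0 < q ∧ 0 < r ∧
        p*(X0^2 - X1^2) + q*(Y0^2 - Y1^2) + r*(Z0^2 - Z1^2) = 0 ∧
        p*(X0*X1) + q*(Y0*Y1) + r*(Z0*Z1) = 0 := by
    intro X0 X1 Y0 Y1 Z0 Z1 h1 h2 hd
    obtain ⟨hce, hab⟩ := signs (X0*Y0 + X1*Y1) (X0*Y1 - X1*Y0) (Y0*Z0 + Y1*Z1)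
      (Y0*Z1 - Y1*Z0) (X0*Z1 - X1*Z0) (X0*Z0 + X1*Z1) (Y0^2 + Y1^2)
      h1 h2 hd (by positivity) (by ring) (by ring)
    refine ⟨2*((Y0*Z0 + Y1*Z1)*(Y0*Z1 - Y1*Z0)),
      -(2*((X0*Z0 + X1*Z1)*(X0*Z1 - X1*Z0))),
      2*((X0*Y0 + X1*Y1)*(X0*Y1 - X1*Y0)), by linarith,
      by nlinarith [mul_neg_of_neg_of_pos h1 hd], by linarith, by ring, by ring⟩
  rcases lt_trichotomy (x0*z1 - x1*z0) 0 with hd | hd | hd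
  · obtain ⟨p, q, r, hp, hq, hr, e1, e2⟩ :=
      main x1 x0 y1 y0 z1 z0 (by linarith) (by nlinarith) (by linarith)
    exact ⟨p, q, r, hp, hq, hr, by linarith, by linarith⟩
  · exact (dne (x0*y0 + x1*y1) (x0*y1 - x1*y0) (y0*z0 + y1*z1)
      (y0*z1 - y1*z0) (x0*z0 + x1*z1) (y0^2 + y1^2) h1 h2 (by positivity)
      (by ring) (by linear_combination (y0^2 + y1^2) * hd)).elim
  · exact main x0 x1 y0 y1 z0 z1 h1 h2 hd

private lemma coord_inner (u w : EuclideanSpace ℝ (Fin 2)) :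
    ⟪u, w⟫ = u 0 * w 0 + u 1 * w 1 := by
  simp [PiLp.inner_apply, Fin.sum_univ_two, RCLike.inner_apply]; ring

private lemma coord_norm (v : EuclideanSpace ℝ (Fin 2)) : ‖v‖^2 = v 0 ^2 + v 1 ^2 := by
  rw [← real_inner_self_eq_norm_sq, coord_inner]; ring

private lemma coord_pos (u : EuclideanSpace ℝ (Fin 2)) (h : u ≠ 0) :
    0 < u 0 ^ 2 + u 1 ^ 2 := by
  rw [← coord_norm]
  have : 0 < ‖u‖ := norm_pos_iff.mpr h
  positivity

theorem stmt_12 (m : ℕ) (φ : Fin m → EuclideanSpace ℝ (Fin 2)) (i j k : Fin m)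
    (hij : i ≠ j) (hjk : j ≠ k) (hik : i ≠ k)
    (hi : φ i ≠ 0) (hj : φ j ≠ 0) (hk : φ k ≠ 0)
    (h1 : ⟪φ i, φ k⟫ < 0) (h2 : 0 < ⟪φ i, φ j⟫ * ⟪φ j, φ k⟫) :
    ∃ c : Fin m → ℝ, (∀ l, 0 ≤ c l) ∧ 0 < c i ∧ 0 < c j ∧ 0 < c k ∧
      (∀ l, l ≠ i → l ≠ j → l ≠ k → c l = 0) ∧
      ∃ A : ℝ, 0 < A ∧
        ∀ v : EuclideanSpace ℝ (Fin 2), ∑ l, ⟪v, c l • φ l⟫ ^ 2 = A * ‖v‖ ^ 2 := by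
  rw [coord_inner] at h1
  rw [coord_inner (φ i) (φ j), coord_inner (φ j) (φ k)] at h2
  obtain ⟨p, q, r, hp, hq, hr, E1, E2⟩ :=
    key (φ i 0) (φ i 1) (φ j 0) (φ j 1) (φ k 0) (φ k 1) h1 h2
  set c : Fin m → ℝ := fun l =>
    if l = i then Real.sqrt p else if l = j then Real.sqrt q
    else if l = k then Real.sqrt r else 0 with hc
  have ci : c i = Real.sqrt p := by simp [hc]
  have cj : c j = Real.sqrt q := by simp [hc, Ne.symm hij]
  have ck : c k = Real.sqrt r := by simp [hc, Ne.symm hik, Ne.symm hjk]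
  have hxi := coord_pos (φ i) hi
  have hyj := coord_pos (φ j) hj
  have hzk := coord_pos (φ k) hk
  refine ⟨c, ?_, ?_, ?_, ?_, ?_,
    (p*(φ i 0 ^2 + φ i 1 ^2) + q*(φ j 0 ^2 + φ j 1 ^2) + r*(φ k 0 ^2 + φ k 1 ^2))/2,
    ?_, ?_⟩
  · intro l; rw [hc]; dsimp only; split_ifs <;> positivity
  · rw [ci]; exact Real.sqrt_pos.mpr hp
  · rw [cj]; exact Real.sqrt_pos.mpr hq
  · rw [ck]; exact Real.sqrt_pos.mpr hr
  · intro l hli hlj hlk; simp [hc, hli, hlj, hlk]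
  · nlinarith [mul_pos hp hxi, mul_pos hq hyj, mul_pos hr hzk]
  · intro v
    have hzero : ∀ l ∈ Finset.univ, l ∉ ({i, j, k} : Finset (Fin m)) →
        ⟪v, c l • φ l⟫ ^ 2 = 0 := by
      intro l _ hl
      simp only [Finset.mem_insert, Finset.mem_singleton, not_or] at hl
      have : c l = 0 := by simp [hc, hl.1, hl.2.1, hl.2.2]
      simp [this]
    rw [← Finset.sum_subset (Finset.subset_univ ({i, j, k} : Finset (Fin m))) hzero]
    rw [Finset.sum_insert (by simp [hij, hik]),
        Finset.sum_insert (by simp [hjk]), Finset.sum_singleton]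
    rw [ci, cj, ck, real_inner_smul_right, real_inner_smul_right, real_inner_smul_right,
        coord_inner, coord_inner, coord_inner, coord_norm]
    have sp : Real.sqrt p ^ 2 = p := Real.sq_sqrt hp.le
    have sq : Real.sqrt q ^ 2 = q := Real.sq_sqrt hq.le
    have sr : Real.sqrt r ^ 2 = r := Real.sq_sqrt hr.le
    rw [mul_pow, mul_pow, mul_pow, sp, sq, sr]
    linear_combination ((v 0)^2 - (v 1)^2)/2 * E1 + 2*(v 0)*(v 1)*E2
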